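/- Let n ≥ 3 and k ≥ 1 be integers. Then the induced matching number of the perfect semiregular tree T_{n,k} equals (n(n−1)^{k+1} − n(n−1))/((n−1)^3 − 1) if k ≡ 0 (mod 3); equals (n(n−1)^{k+1} − (n−1)^2 − 1)/((n−1)^3 − 1) if k ≡ 1 (mod 3); and equals (n(n−1)^{k+1} − n)/((n−1)^3 − 1) if k ≡ 2 (mod 3). -/

import Mathlib

open MvPolynomial

/-- Level sizes of the perfect semiregular tree `T_{n,k}`. -/
def semiLevel (n : ℕ) : ℕ → ℕ
  | 0 => 1
  | a + 1 => n * (n - 1) ^ a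

/-- Vertices of the perfect semiregular tree `T_{n,k}`. -/
abbrev SemiVert (n k : ℕ) : Type := Σ a : Fin (k + 1), Fin (semiLevel n (a : ℕ))

/-- The perfect semiregular tree `T_{n,k}`: every internal (non-pendant) vertex has degree
`n` and every pendant vertex is at distance `k` from the root.  The vertex `j` at level
`a+1` is a child of vertex `j/(n-1)` at level `a` (of the root when `a = 0`). -/
def semiTree (n k : ℕ) : SimpleGraph (SemiVert n k) :=
  SimpleGraph.fromRel (fun v w =>
    (v.1 : ℕ) + 1 = (w.1 : ℕ) ∧ ((v.1 : ℕ) = 0 ∨ (v.2 : ℕ) = (w.2 : ℕ) / (n - 1)))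

/-- An induced matching in `G`: a set of edges of `G` such that any two distinct edges in
it share no vertex and are joined by no edge of `G`. -/
def IsInducedMatching {V : Type} (G : SimpleGraph V) (M : Set (Sym2 V)) : Prop :=
  M ⊆ G.edgeSet ∧
  ∀ e ∈ M, ∀ f ∈ M, e ≠ f → ∀ v ∈ e, ∀ w ∈ f, v ≠ w ∧ ¬ G.Adj v w

/-- The induced matching number of a graph: the maximum size of an induced matching. -/
noncomputable def indMatchNum {V : Type} (G : SimpleGraph V) : ℕ :=
  sSup {d | ∃ M : Finset (Sym2 V), IsInducedMatching G (M : Set (Sym2 V)) ∧ M.card = d}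

namespace IMAux

variable {n k : ℕ}

lemma vert_ext {u w : SemiVert n k} (h1 : (u.1 : ℕ) = (w.1 : ℕ)) (h2 : (u.2 : ℕ) = (w.2 : ℕ)) :
    u = w := by
  rcases u with ⟨⟨a, ha⟩, ⟨j, hj⟩⟩
  rcases w with ⟨⟨b, hb⟩, ⟨i, hi⟩⟩
  simp only [Fin.val_mk] at h1 h2
  subst h1
  subst h2
  rfl

def eLevel (e : Sym2 (SemiVert n k)) : ℕ :=
  Sym2.lift ⟨fun p q => min (p.1 : ℕ) (q.1 : ℕ), fun _ _ => min_comm _ _⟩ e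

def topIdx (e : Sym2 (SemiVert n k)) : ℕ :=
  Sym2.lift ⟨fun p q =>
    if (p.1 : ℕ) < (q.1 : ℕ) then (p.2 : ℕ)
    else if (q.1 : ℕ) < (p.1 : ℕ) then (q.2 : ℕ)
    else max (p.2 : ℕ) (q.2 : ℕ), by
      intro a b
      dsimp only
      rcases lt_trichotomy ((a.1 : ℕ)) ((b.1 : ℕ)) with h | h | h
      · rw [if_pos h, if_neg (by omega), if_pos h]
      · rw [if_neg (by omega), if_neg (by omega), if_neg (by omega), if_neg (by omega),
          max_comm]
      · rw [if_neg (by omega), if_pos h, if_pos h]⟩ e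

def botIdx (e : Sym2 (SemiVert n k)) : ℕ :=
  Sym2.lift ⟨fun p q =>
    if (p.1 : ℕ) < (q.1 : ℕ) then (q.2 : ℕ)
    else if (q.1 : ℕ) < (p.1 : ℕ) then (p.2 : ℕ)
    else max (p.2 : ℕ) (q.2 : ℕ), by
      intro a b
      dsimp only
      rcases lt_trichotomy ((a.1 : ℕ)) ((b.1 : ℕ)) with h | h | h
      · rw [if_pos h, if_neg (by omega), if_pos h]
      · rw [if_neg (by omega), if_neg (by omega), if_neg (by omega), if_neg (by omega),
          max_comm]
      · rw [if_neg (by omega), if_pos h, if_pos h]⟩ e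

lemma eLevel_mk {u w : SemiVert n k} (h : (u.1 : ℕ) < (w.1 : ℕ)) :
    eLevel s(u, w) = (u.1 : ℕ) := by
  simp only [eLevel, Sym2.lift_mk]
  omega

lemma topIdx_mk {u w : SemiVert n k} (h : (u.1 : ℕ) < (w.1 : ℕ)) :
    topIdx s(u, w) = (u.2 : ℕ) := by
  simp only [topIdx, Sym2.lift_mk]
  rw [if_pos h]

lemma botIdx_mk {u w : SemiVert n k} (h : (u.1 : ℕ) < (w.1 : ℕ)) :
    botIdx s(u, w) = (w.2 : ℕ) := by
  simp only [botIdx, Sym2.lift_mk]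
  rw [if_pos h]

lemma edge_struct {e : Sym2 (SemiVert n k)} (he : e ∈ (semiTree n k).edgeSet) :
    ∃ u w : SemiVert n k, e = s(u, w) ∧ (u.1 : ℕ) = eLevel e ∧ (w.1 : ℕ) = eLevel e + 1 ∧
      ((u.1 : ℕ) = 0 ∨ (u.2 : ℕ) = (w.2 : ℕ) / (n - 1)) ∧
      topIdx e = (u.2 : ℕ) ∧ botIdx e = (w.2 : ℕ) ∧ eLevel e + 1 ≤ k := by
  induction e with
  | _ a b =>
    rw [SimpleGraph.mem_edgeSet, semiTree, SimpleGraph.fromRel_adj] at he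
    obtain ⟨hne, h | h⟩ := he
    · have hlt : (a.1 : ℕ) < (b.1 : ℕ) := by omega
      have hb := b.1.isLt
      exact ⟨a, b, rfl, by rw [eLevel_mk hlt], by rw [eLevel_mk hlt]; omega, h.2,
        topIdx_mk hlt, botIdx_mk hlt, by rw [eLevel_mk hlt]; omega⟩
    · have hlt : (b.1 : ℕ) < (a.1 : ℕ) := by omega
      have ha := a.1.isLt
      have hs : s(a, b) = s(b, a) := Sym2.eq_swap
      rw [hs]
      exact ⟨b, a, rfl, by rw [eLevel_mk hlt], by rw [eLevel_mk hlt]; omega, h.2,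
        topIdx_mk hlt, botIdx_mk hlt, by rw [eLevel_mk hlt]; omega⟩

end IMAux
namespace IMAux

variable {n k : ℕ}

lemma adj_of_coords {u w : SemiVert n k} (h1 : (u.1 : ℕ) + 1 = (w.1 : ℕ))
    (h2 : (u.1 : ℕ) = 0 ∨ (u.2 : ℕ) = (w.2 : ℕ) / (n - 1)) : (semiTree n k).Adj u w := by
  rw [semiTree, SimpleGraph.fromRel_adj]
  exact ⟨fun hEq => by rw [hEq] at h1; omega, Or.inl ⟨h1, h2⟩⟩

lemma not_adj_of_coords {u w : SemiVert n k} (h1 : (u.1 : ℕ) + 1 ≠ (w.1 : ℕ))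
    (h2 : (w.1 : ℕ) + 1 ≠ (u.1 : ℕ)) : ¬ (semiTree n k).Adj u w := by
  rw [semiTree, SimpleGraph.fromRel_adj]
  rintro ⟨-, ⟨h, -⟩ | ⟨h, -⟩⟩ <;> omega

lemma ne_of_level {u w : SemiVert n k} (h : (u.1 : ℕ) ≠ (w.1 : ℕ)) : u ≠ w :=
  fun hEq => h (by rw [hEq])

variable {M : Finset (Sym2 (SemiVert n k))} (hM : IsInducedMatching (semiTree n k) (M : Set (Sym2 (SemiVert n k))))

include hM

lemma eq_of_shared {e f : Sym2 (SemiVert n k)} (he : e ∈ M) (hf : f ∈ M)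
    {v : SemiVert n k} (hv : v ∈ e) (hv' : v ∈ f) : e = f := by
  by_contra hne
  exact (hM.2 e he f hf hne v hv v hv').1 rfl

lemma not_adj_of_mem {e f : Sym2 (SemiVert n k)} (he : e ∈ M) (hf : f ∈ M) (hne : e ≠ f)
    {v w : SemiVert n k} (hv : v ∈ e) (hw : w ∈ f) : ¬ (semiTree n k).Adj v w :=
  (hM.2 e he f hf hne v hv w hw).2

end IMAux
namespace IMAux

variable {n k : ℕ}

lemma div_helper {m a i : ℕ} (hm : 0 < m) (hi : i < m) : (a * m + i) / m = a := by
  rw [mul_comm, Nat.mul_add_div hm, Nat.div_eq_of_lt hi, add_zero]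

lemma token_split {m a b i j : ℕ} (hm : 0 < m) (hi : i < m) (hj : j < m)
    (h : a * m + i = b * m + j) : a = b ∧ i = j := by
  have ha : (a * m + i) / m = a := div_helper hm hi
  have hb : (b * m + j) / m = b := div_helper hm hj
  have hab : a = b := by rw [← ha, h, hb]
  subst hab
  exact ⟨rfl, by omega⟩

lemma semiLevel_pos (hn : 2 ≤ n) (a : ℕ) : 0 < semiLevel n a := by
  cases a with
  | zero => exact Nat.one_pos
  | succ b =>
    simp only [semiLevel]
    exact Nat.mul_pos (by omega) (Nat.pow_pos (by omega))

lemma semiLevel_succ_succ (a : ℕ) : semiLevel n (a + 2) = semiLevel n (a + 1) * (n - 1) := by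
  simp only [semiLevel, pow_succ, mul_assoc]

lemma token_lt (hn : 2 ≤ n) {a j i : ℕ} (hj : j < semiLevel n (a + 1)) (hi : i < n - 1) :
    j * (n - 1) + i < semiLevel n (a + 2) := by
  rw [semiLevel_succ_succ]
  calc j * (n - 1) + i < (j + 1) * (n - 1) := by rw [add_mul, one_mul]; omega
    _ ≤ semiLevel n (a + 1) * (n - 1) := Nat.mul_le_mul_right _ (by omega)

def xM (M : Finset (Sym2 (SemiVert n k))) (a : ℕ) : ℕ :=
  (M.filter fun e => eLevel e = a).card

variable {M : Finset (Sym2 (SemiVert n k))}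
  (hM : IsInducedMatching (semiTree n k) (M : Set (Sym2 (SemiVert n k))))

include hM

lemma mem_top {e : Sym2 (SemiVert n k)} (he : e ∈ M) {a : ℕ} (hl : eLevel e = a) :
    ∃ u : SemiVert n k, u ∈ e ∧ (u.1 : ℕ) = a ∧ (u.2 : ℕ) = topIdx e ∧
      (u.2 : ℕ) < semiLevel n a := by
  obtain ⟨u, w, hew, hu1, hw1, -, ht, -, -⟩ := edge_struct (hM.1 he)
  refine ⟨u, by rw [hew]; exact Sym2.mem_mk_left _ _, by omega, by omega, ?_⟩
  have h2 : (u.1 : ℕ) = a := by omega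
  rw [← h2]
  exact u.2.isLt

lemma mem_bot {e : Sym2 (SemiVert n k)} (he : e ∈ M) {a : ℕ} (hl : eLevel e = a) :
    ∃ w : SemiVert n k, w ∈ e ∧ (w.1 : ℕ) = a + 1 ∧ (w.2 : ℕ) = botIdx e ∧
      (w.2 : ℕ) < semiLevel n (a + 1) := by
  obtain ⟨u, w, hew, hu1, hw1, -, -, hb, -⟩ := edge_struct (hM.1 he)
  refine ⟨w, by rw [hew]; exact Sym2.mem_mk_right _ _, by omega, by omega, ?_⟩
  have h2 : (w.1 : ℕ) = a + 1 := by omega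
  rw [← h2]
  exact w.2.isLt

end IMAux
namespace IMAux

variable {n k : ℕ}

variable {M : Finset (Sym2 (SemiVert n k))}
  (hM : IsInducedMatching (semiTree n k) (M : Set (Sym2 (SemiVert n k))))

include hM

lemma x_le (a : ℕ) : xM M a ≤ semiLevel n a := by
  have hsub : (M.filter fun e => eLevel e = a).image topIdx ⊆ Finset.range (semiLevel n a) := by
    intro x hx
    obtain ⟨e, he, rfl⟩ := Finset.mem_image.mp hx
    have hem := Finset.mem_filter.mp he
    obtain ⟨u, -, -, hu2, hlt⟩ := mem_top hM hem.1 hem.2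
    exact Finset.mem_range.mpr (hu2 ▸ hlt)
  have hinj : Set.InjOn topIdx ((M.filter fun e => eLevel e = a : Finset _) : Set (Sym2 (SemiVert n k))) := by
    intro e he f hf hef
    rw [Finset.mem_coe, Finset.mem_filter] at he hf
    obtain ⟨u, hue, hu1, hu2, -⟩ := mem_top hM he.1 he.2
    obtain ⟨v, hvf, hv1, hv2, -⟩ := mem_top hM hf.1 hf.2
    have huv : u = v := vert_ext (by omega) (by omega)
    exact eq_of_shared hM he.1 hf.1 hue (huv ▸ hvf)
  have h1 := Finset.card_image_of_injOn hinj
  have h2 := Finset.card_le_card hsub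
  rw [Finset.card_range] at h2
  unfold xM
  omega

lemma x_zero_one (h : 1 ≤ xM M 0) : xM M 1 = 0 := by
  obtain ⟨e, he⟩ := Finset.card_pos.mp h
  have hem := Finset.mem_filter.mp he
  unfold xM
  rw [Finset.card_eq_zero, Finset.eq_empty_iff_forall_notMem]
  intro f hf
  have hfm := Finset.mem_filter.mp hf
  obtain ⟨u, hue, hu1, -, -⟩ := mem_top hM hem.1 hem.2
  obtain ⟨v, hvf, hv1, -, -⟩ := mem_top hM hfm.1 hfm.2
  have hne : e ≠ f := fun hEq => by rw [hEq, hfm.2] at hem; exact absurd hem.2 (by omega)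
  exact not_adj_of_mem hM hem.1 hfm.1 hne hue hvf
    (adj_of_coords (by omega) (Or.inl (by omega)))

lemma constraint_K (hn : 3 ≤ n) (t : ℕ) :
    xM M (t + 2) + (n - 1) * xM M (t + 1) + (n - 1) * xM M t ≤ semiLevel n (t + 2) := by
  have hm : 0 < n - 1 := by omega
  set m := n - 1 with hmdef
  set F : ℕ → Finset (Sym2 (SemiVert n k)) := fun a => M.filter fun e => eLevel e = a with hF
  have hFmem : ∀ {a e}, e ∈ F a → e ∈ M ∧ eLevel e = a := fun h => Finset.mem_filter.mp h
  set T2 := (F (t + 2)).image topIdx with hT2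
  set T1 := ((F (t + 1)) ×ˢ Finset.range m).image (fun p => topIdx p.1 * m + p.2) with hT1
  set T0 := ((F t) ×ˢ Finset.range m).image (fun p => botIdx p.1 * m + p.2) with hT0
  -- cards
  have hT2card : T2.card = xM M (t + 2) := by
    apply Finset.card_image_of_injOn
    intro e he f hf hef
    rw [Finset.mem_coe] at he hf
    obtain ⟨he1, he2⟩ := hFmem he
    obtain ⟨hf1, hf2⟩ := hFmem hf
    obtain ⟨u, hue, hu1, hu2, -⟩ := mem_top hM he1 he2
    obtain ⟨v, hvf, hv1, hv2, -⟩ := mem_top hM hf1 hf2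
    have huv : u = v := vert_ext (by omega) (by omega)
    exact eq_of_shared hM he1 hf1 hue (huv ▸ hvf)
  have hT1card : T1.card = xM M (t + 1) * m := by
    have hinj : Set.InjOn (fun p : Sym2 (SemiVert n k) × ℕ => topIdx p.1 * m + p.2)
        ((F (t + 1) ×ˢ Finset.range m : Finset _) : Set (Sym2 (SemiVert n k) × ℕ)) := by
      intro p hp q hq hpq
      rw [Finset.mem_coe] at hp hq
      rw [Finset.mem_product, Finset.mem_range] at hp hq
      obtain ⟨hp1, hp2⟩ := hp
      obtain ⟨hq1, hq2⟩ := hq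
      obtain ⟨hts, his⟩ := token_split hm hp2 hq2 hpq
      obtain ⟨he1, he2⟩ := hFmem hp1
      obtain ⟨hf1, hf2⟩ := hFmem hq1
      obtain ⟨u, hue, hu1, hu2, -⟩ := mem_top hM he1 he2
      obtain ⟨v, hvf, hv1, hv2, -⟩ := mem_top hM hf1 hf2
      have huv : u = v := vert_ext (by omega) (by omega)
      have := eq_of_shared hM he1 hf1 hue (huv ▸ hvf)
      exact Prod.ext this his
    rw [hT1, Finset.card_image_of_injOn hinj, Finset.card_product, Finset.card_range]
    rfl
  have hT0card : T0.card = xM M t * m := by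
    have hinj : Set.InjOn (fun p : Sym2 (SemiVert n k) × ℕ => botIdx p.1 * m + p.2)
        ((F t ×ˢ Finset.range m : Finset _) : Set (Sym2 (SemiVert n k) × ℕ)) := by
      intro p hp q hq hpq
      rw [Finset.mem_coe] at hp hq
      rw [Finset.mem_product, Finset.mem_range] at hp hq
      obtain ⟨hp1, hp2⟩ := hp
      obtain ⟨hq1, hq2⟩ := hq
      obtain ⟨hts, his⟩ := token_split hm hp2 hq2 hpq
      obtain ⟨he1, he2⟩ := hFmem hp1
      obtain ⟨hf1, hf2⟩ := hFmem hq1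
      obtain ⟨u, hue, hu1, hu2, -⟩ := mem_bot hM he1 he2
      obtain ⟨v, hvf, hv1, hv2, -⟩ := mem_bot hM hf1 hf2
      have huv : u = v := vert_ext (by omega) (by omega)
      have := eq_of_shared hM he1 hf1 hue (huv ▸ hvf)
      exact Prod.ext this his
    rw [hT0, Finset.card_image_of_injOn hinj, Finset.card_product, Finset.card_range]
    rfl
  -- subset of range
  have hsub : T2 ∪ T1 ∪ T0 ⊆ Finset.range (semiLevel n (t + 2)) := by
    intro x hx
    rw [Finset.mem_union, Finset.mem_union] at hx
    rw [Finset.mem_range]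
    rcases hx with (hx | hx) | hx
    · obtain ⟨e, he, rfl⟩ := Finset.mem_image.mp hx
      obtain ⟨he1, he2⟩ := hFmem he
      obtain ⟨u, -, -, hu2, hlt⟩ := mem_top hM he1 he2
      omega
    · obtain ⟨p, hp, rfl⟩ := Finset.mem_image.mp hx
      rw [Finset.mem_product, Finset.mem_range] at hp
      obtain ⟨he1, he2⟩ := hFmem hp.1
      obtain ⟨u, -, -, hu2, hlt⟩ := mem_top hM he1 he2
      exact token_lt (by omega) (by omega) hp.2
    · obtain ⟨p, hp, rfl⟩ := Finset.mem_image.mp hx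
      rw [Finset.mem_product, Finset.mem_range] at hp
      obtain ⟨he1, he2⟩ := hFmem hp.1
      obtain ⟨w, -, -, hw2, hlt⟩ := mem_bot hM he1 he2
      exact token_lt (by omega) (by omega) hp.2
  -- disjointness
  have hd21 : Disjoint T2 T1 := by
    rw [Finset.disjoint_left]
    rintro x hx2 hx1
    obtain ⟨e, he, rfl⟩ := Finset.mem_image.mp hx2
    obtain ⟨p, hp, hpx⟩ := Finset.mem_image.mp hx1
    rw [Finset.mem_product, Finset.mem_range] at hp
    obtain ⟨he1, he2⟩ := hFmem he
    obtain ⟨hf1, hf2⟩ := hFmem hp.1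
    obtain ⟨u, hue, hu1, hu2, -⟩ := mem_top hM he1 he2
    obtain ⟨v, hvf, hv1, hv2, -⟩ := mem_top hM hf1 hf2
    have hne : p.1 ≠ e := fun hEq => by rw [hEq, he2] at hf2; omega
    have hx : (u.2 : ℕ) = (v.2 : ℕ) * m + p.2 := by rw [hv2]; omega
    have hadj : (semiTree n k).Adj v u :=
      adj_of_coords (by omega) (Or.inr (by rw [hx, div_helper hm hp.2]))
    exact not_adj_of_mem hM hf1 he1 hne hvf hue hadj
  have hd20 : Disjoint T2 T0 := by
    rw [Finset.disjoint_left]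
    rintro x hx2 hx1
    obtain ⟨e, he, rfl⟩ := Finset.mem_image.mp hx2
    obtain ⟨p, hp, hpx⟩ := Finset.mem_image.mp hx1
    rw [Finset.mem_product, Finset.mem_range] at hp
    obtain ⟨he1, he2⟩ := hFmem he
    obtain ⟨hf1, hf2⟩ := hFmem hp.1
    obtain ⟨u, hue, hu1, hu2, -⟩ := mem_top hM he1 he2
    obtain ⟨v, hvf, hv1, hv2, -⟩ := mem_bot hM hf1 hf2
    have hne : p.1 ≠ e := fun hEq => by rw [hEq, he2] at hf2; omega
    have hx : (u.2 : ℕ) = (v.2 : ℕ) * m + p.2 := by rw [hv2]; omega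
    have hadj : (semiTree n k).Adj v u :=
      adj_of_coords (by omega) (Or.inr (by rw [hx, div_helper hm hp.2]))
    exact not_adj_of_mem hM hf1 he1 hne hvf hue hadj
  have hd10 : Disjoint T1 T0 := by
    rw [Finset.disjoint_left]
    rintro x hx1 hx0
    obtain ⟨p, hp, hpx⟩ := Finset.mem_image.mp hx1
    obtain ⟨q, hq, hqx⟩ := Finset.mem_image.mp hx0
    rw [Finset.mem_product, Finset.mem_range] at hp hq
    obtain ⟨he1, he2⟩ := hFmem hp.1
    obtain ⟨hf1, hf2⟩ := hFmem hq.1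
    obtain ⟨u, hue, hu1, hu2, -⟩ := mem_top hM he1 he2
    obtain ⟨v, hvf, hv1, hv2, -⟩ := mem_bot hM hf1 hf2
    obtain ⟨hts, -⟩ := token_split hm hp.2 hq.2 (hpx.trans hqx.symm)
    have huv : u = v := vert_ext (by omega) (by omega)
    have heq := eq_of_shared hM he1 hf1 hue (huv ▸ hvf)
    rw [heq, hf2] at he2
    omega
  have hdU : Disjoint (T2 ∪ T1) T0 := Finset.disjoint_union_left.mpr ⟨hd20, hd10⟩
  have hcard : (T2 ∪ T1 ∪ T0).card = T2.card + T1.card + T0.card := by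
    rw [Finset.card_union_of_disjoint hdU, Finset.card_union_of_disjoint hd21]
  have hle := Finset.card_le_card hsub
  rw [Finset.card_range, hcard, hT2card, hT1card, hT0card] at hle
  rw [mul_comm m (xM M (t + 1)), mul_comm m (xM M t)]
  exact hle

end IMAux
namespace IMAux

variable {n k : ℕ}

lemma card_eq_sum_xM {M : Finset (Sym2 (SemiVert n k))}
    (hM : IsInducedMatching (semiTree n k) (M : Set (Sym2 (SemiVert n k)))) (hk : 1 ≤ k) :
    M.card = ∑ a ∈ Finset.range k, xM M a := by
  apply Finset.card_eq_sum_card_fiberwise (f := eLevel)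
  intro e he
  obtain ⟨u, w, -, -, -, -, -, -, hle⟩ := edge_struct (hM.1 he)
  exact Finset.mem_range.mpr (by omega)

def Bv (n : ℕ) : ℕ → ℕ
  | 0 => 0
  | 1 => 1
  | 2 => n
  | (t + 3) => Bv n t + semiLevel n (t + 2)

lemma sum_le_Bv (hn : 3 ≤ n) (x : ℕ → ℕ) (h0 : x 0 ≤ 1) (h01 : 1 ≤ x 0 → x 1 = 0)
    (hx : ∀ a, x a ≤ semiLevel n a)
    (hK : ∀ t, x (t + 2) + (n - 1) * x (t + 1) + (n - 1) * x t ≤ semiLevel n (t + 2)) :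
    ∀ K, ∑ a ∈ Finset.range K, x a ≤ Bv n K := by
  intro K
  induction K using Nat.strong_induction_on with
  | _ K ih =>
    match K with
    | 0 => simp [Bv]
    | 1 => simpa [Bv, Finset.sum_range_one] using h0
    | 2 =>
      rw [Finset.sum_range_succ, Finset.sum_range_one]
      have h1 : x 1 ≤ semiLevel n 1 := hx 1
      have h2 : semiLevel n 1 = n := by simp [semiLevel]
      show x 0 + x 1 ≤ Bv n 2
      have h3 : Bv n 2 = n := rfl
      rcases Nat.eq_zero_or_pos (x 0) with h | h
      · omega
      · have := h01 h; omega
    | (t + 3) =>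
      rw [Finset.sum_range_succ, Finset.sum_range_succ, Finset.sum_range_succ]
      have h1 := ih t (by omega)
      have h2 := hK t
      have hp : 0 < n - 1 := by omega
      have h4 := Nat.le_mul_of_pos_left (x (t + 1)) hp
      have h5 := Nat.le_mul_of_pos_left (x t) hp
      have h6 : Bv n (t + 3) = Bv n t + semiLevel n (t + 2) := rfl
      omega

lemma semiLevel_cast (hn : 1 ≤ n) (a : ℕ) :
    ((semiLevel n (a + 1) : ℕ) : ℚ) = (n : ℚ) * ((n : ℚ) - 1) ^ a := by
  show ((n * (n - 1) ^ a : ℕ) : ℚ) = _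
  push_cast [Nat.cast_sub hn]
  ring

lemma Bv_cast (hn : 3 ≤ n) : ∀ K, 1 ≤ K →
    (Bv n K : ℚ) * (((n : ℚ) - 1) ^ 3 - 1) =
      (if K % 3 = 0 then (n : ℚ) * ((n : ℚ) - 1) ^ (K + 1) - (n : ℚ) * ((n : ℚ) - 1)
       else if K % 3 = 1 then (n : ℚ) * ((n : ℚ) - 1) ^ (K + 1) - ((n : ℚ) - 1) ^ 2 - 1
       else (n : ℚ) * ((n : ℚ) - 1) ^ (K + 1) - (n : ℚ)) := by
  intro K
  induction K using Nat.strong_induction_on with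
  | _ K ih =>
    match K with
    | 0 => intro h; omega
    | 1 => intro _; norm_num [Bv]; ring
    | 2 => intro _; norm_num [Bv]; ring
    | 3 =>
      intro _
      have h3 : Bv n 3 = Bv n 0 + semiLevel n 2 := rfl
      have h0 : Bv n 0 = 0 := rfl
      norm_num [h3, h0, semiLevel_cast (by omega : 1 ≤ n) 1]
      ring
    | (K + 4) =>
      intro _
      have hstep : Bv n (K + 4) = Bv n (K + 1) + semiLevel n (K + 3) := rfl
      have hih := ih (K + 1) (by omega) (by omega)
      have hmod : (K + 4) % 3 = (K + 1) % 3 := by omega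
      rw [hstep, hmod]
      push_cast
      rw [semiLevel_cast (by omega : 1 ≤ n) (K + 2)]
      have hpow : ((n : ℚ) - 1) ^ (K + 4 + 1) = ((n : ℚ) - 1) ^ (K + 1 + 1) * ((n : ℚ) - 1) ^ 3 := by
        rw [← pow_add]
      rcases (show (K + 1) % 3 = 0 ∨ (K + 1) % 3 = 1 ∨ (K + 1) % 3 = 2 by omega) with h | h | h
      · rw [if_pos h] at hih
        rw [if_pos h, hpow]
        linear_combination hih
      · rw [if_neg (by omega), if_pos h] at hih
        rw [if_neg (by omega), if_pos h, hpow]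
        linear_combination hih
      · rw [if_neg (by omega), if_neg (by omega)] at hih
        rw [if_neg (by omega), if_neg (by omega), hpow]
        linear_combination hih

end IMAux
namespace IMAux

variable {n k : ℕ}

lemma child_lt (hn : 3 ≤ n) {a : ℕ} (j : Fin (semiLevel n a)) :
    (j : ℕ) * (n - 1) < semiLevel n (a + 1) := by
  cases a with
  | zero =>
    have hj : (j : ℕ) = 0 := by
      have h1 := j.isLt
      have h2 : semiLevel n 0 = 1 := rfl
      omega
    rw [hj, zero_mul]
    exact semiLevel_pos (by omega) 1
  | succ b =>
    rw [semiLevel_succ_succ]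
    have hpos : 0 < n - 1 := by omega
    exact (Nat.mul_lt_mul_right hpos).mpr j.isLt

def childV (hn : 3 ≤ n) (v : SemiVert n k) : SemiVert n k :=
  if h : (v.1 : ℕ) < k then
    ⟨⟨(v.1 : ℕ) + 1, by omega⟩, ⟨(v.2 : ℕ) * (n - 1), child_lt hn v.2⟩⟩
  else v

lemma childV_fst (hn : 3 ≤ n) {v : SemiVert n k} (h : (v.1 : ℕ) < k) :
    ((childV hn v).1 : ℕ) = (v.1 : ℕ) + 1 := by
  simp only [childV, dif_pos h]

lemma childV_snd (hn : 3 ≤ n) {v : SemiVert n k} (h : (v.1 : ℕ) < k) :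
    ((childV hn v).2 : ℕ) = (v.2 : ℕ) * (n - 1) := by
  unfold childV
  rw [dif_pos h]

def blockM (n k : ℕ) (hn : 3 ≤ n) : Finset (Sym2 (SemiVert n k)) :=
  (Finset.univ.filter fun v : SemiVert n k =>
    (v.1 : ℕ) < k ∧ (v.1 : ℕ) % 3 = (k - 1) % 3).image (fun v => s(v, childV hn v))

lemma not_adj_parentlike {v w : SemiVert n k} (h1 : (v.1 : ℕ) + 1 = (w.1 : ℕ))
    (h0 : (v.1 : ℕ) ≠ 0) (hdiv : (v.2 : ℕ) ≠ (w.2 : ℕ) / (n - 1)) :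
    ¬ (semiTree n k).Adj v w := by
  rw [semiTree, SimpleGraph.fromRel_adj]
  rintro ⟨-, ⟨-, h | h⟩ | ⟨h, -⟩⟩
  · exact h0 h
  · exact hdiv h
  · omega

lemma blockM_induced (hn : 3 ≤ n) :
    IsInducedMatching (semiTree n k) ((blockM n k hn : Finset _) : Set (Sym2 (SemiVert n k))) := by
  have hp : 0 < n - 1 := by omega
  constructor
  · intro e he
    rw [Finset.mem_coe, blockM, Finset.mem_image] at he
    obtain ⟨v, hv, rfl⟩ := he
    obtain ⟨-, hvk, -⟩ := Finset.mem_filter.mp hv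
    rw [SimpleGraph.mem_edgeSet]
    exact adj_of_coords (by rw [childV_fst hn hvk])
      (Or.inr (by rw [childV_snd hn hvk, Nat.mul_div_cancel _ hp]))
  · intro e he f hf hef p hp' q hq'
    rw [Finset.mem_coe, blockM, Finset.mem_image] at he hf
    obtain ⟨v, hv, rfl⟩ := he
    obtain ⟨w, hw, rfl⟩ := hf
    obtain ⟨-, hvk, hvm⟩ := Finset.mem_filter.mp hv
    obtain ⟨-, hwk, hwm⟩ := Finset.mem_filter.mp hw
    have hvw : v ≠ w := fun h => hef (by rw [h])
    have hcv1 := childV_fst hn hvk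
    have hcv2 := childV_snd hn hvk
    have hcw1 := childV_fst hn hwk
    have hcw2 := childV_snd hn hwk
    have hmod : (v.1 : ℕ) % 3 = (w.1 : ℕ) % 3 := by omega
    have hIeq : (v.1 : ℕ) = (w.1 : ℕ) → (v.2 : ℕ) ≠ (w.2 : ℕ) :=
      fun h1 h2 => hvw (vert_ext h1 h2)
    have hroot : (v.1 : ℕ) = (w.1 : ℕ) → (v.1 : ℕ) ≠ 0 := by
      intro h1 h0
      have h2 := v.2.isLt
      have h3 := w.2.isLt
      have hL1 : semiLevel n (v.1 : ℕ) = 1 := by rw [h0]; rfl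
      have hL2 : semiLevel n (w.1 : ℕ) = 1 := by rw [← h1, h0]; rfl
      exact hIeq h1 (by omega)
    rcases Sym2.mem_iff.mp hp' with hp1 | hp1 <;> rcases Sym2.mem_iff.mp hq' with hq1 | hq1 <;>
      rw [hp1, hq1]
    · exact ⟨hvw, not_adj_of_coords (by omega) (by omega)⟩
    · refine ⟨ne_of_level (by omega), ?_⟩
      by_cases hl : (v.1 : ℕ) = (w.1 : ℕ)
      · refine not_adj_parentlike (by omega) (hroot hl) ?_
        rw [hcw2, Nat.mul_div_cancel _ hp]
        exact fun h => hIeq hl h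
      · exact not_adj_of_coords (by omega) (by omega)
    · refine ⟨ne_of_level (by omega), ?_⟩
      by_cases hl : (v.1 : ℕ) = (w.1 : ℕ)
      · intro hadj
        refine not_adj_parentlike (v := w) (w := childV hn v) (by omega)
          (by rw [← hl]; exact hroot hl) ?_ hadj.symm
        rw [hcv2, Nat.mul_div_cancel _ hp]
        exact fun h => hIeq hl h.symm
      · exact not_adj_of_coords (by omega) (by omega)
    · constructor
      · by_cases hl : (v.1 : ℕ) = (w.1 : ℕ)
        · intro hEq
          have h2 : ((childV hn v).2 : ℕ) = ((childV hn w).2 : ℕ) := by rw [hEq]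
          rw [hcv2, hcw2] at h2
          exact hIeq hl (Nat.eq_of_mul_eq_mul_right hp h2)
        · exact ne_of_level (by omega)
      · exact not_adj_of_coords (by omega) (by omega)

lemma filter_card (hk : 1 ≤ k) :
    (Finset.univ.filter fun v : SemiVert n k =>
      (v.1 : ℕ) < k ∧ (v.1 : ℕ) % 3 = (k - 1) % 3).card
      = ∑ a ∈ Finset.range k, (if a % 3 = (k - 1) % 3 then semiLevel n a else 0) := by
  rw [Finset.card_filter, ← Finset.univ_sigma_univ, Finset.sum_sigma]
  have hstep : ∀ a : Fin (k + 1),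
      (∑ _j : Fin (semiLevel n (a : ℕ)),
        if ((a : ℕ) < k ∧ (a : ℕ) % 3 = (k - 1) % 3) then 1 else 0)
      = (if ((a : ℕ) < k ∧ (a : ℕ) % 3 = (k - 1) % 3) then semiLevel n (a : ℕ) else 0) := by
    intro a
    split_ifs <;> simp
  rw [Finset.sum_congr rfl (fun a _ => hstep a),
    Fin.sum_univ_eq_sum_range
      (fun a => if (a < k ∧ a % 3 = (k - 1) % 3) then semiLevel n a else 0) (k + 1),
    Finset.sum_range_succ]
  simp only [lt_irrefl, false_and, if_false, add_zero]
  refine Finset.sum_congr rfl fun a ha => ?_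
  have := Finset.mem_range.mp ha
  simp only [this, true_and]

lemma Bv_sum (hn : 3 ≤ n) : ∀ K, 1 ≤ K →
    (∑ a ∈ Finset.range K, (if a % 3 = (K - 1) % 3 then semiLevel n a else 0)) = Bv n K := by
  intro K
  induction K using Nat.strong_induction_on with
  | _ K ih =>
    match K with
    | 0 => omega
    | 1 =>
      intro _
      rw [Finset.sum_range_one, if_pos (by omega)]
      rfl
    | 2 =>
      intro _
      rw [Finset.sum_range_succ, Finset.sum_range_one, if_neg (by omega), if_pos (by omega)]
      have h1 : semiLevel n 1 = n * (n - 1) ^ 0 := rfl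
      have h2 : Bv n 2 = n := rfl
      simp only [pow_zero, mul_one] at h1
      omega
    | 3 =>
      intro _
      rw [Finset.sum_range_succ, Finset.sum_range_succ, Finset.sum_range_one,
        if_neg (by omega), if_neg (by omega), if_pos (by omega)]
      have h1 : Bv n 3 = Bv n 0 + semiLevel n 2 := rfl
      have h2 : Bv n 0 = 0 := rfl
      omega
    | (K + 4) =>
      intro _
      rw [Finset.sum_range_succ, Finset.sum_range_succ, Finset.sum_range_succ,
        if_neg (by omega), if_neg (by omega), if_pos (by omega)]
      have hc : ∀ a, (if a % 3 = (K + 4 - 1) % 3 then semiLevel n a else 0)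
          = (if a % 3 = (K + 1 - 1) % 3 then semiLevel n a else 0) := by
        intro a
        congr 1
        simp only [eq_iff_iff]
        omega
      rw [Finset.sum_congr rfl (fun a _ => hc a), ih (K + 1) (by omega) (by omega)]
      have h1 : Bv n (K + 4) = Bv n (K + 1) + semiLevel n (K + 3) := rfl
      omega

lemma blockM_card (hn : 3 ≤ n) (hk : 1 ≤ k) : (blockM n k hn).card = Bv n k := by
  rw [blockM, Finset.card_image_of_injOn, filter_card hk, Bv_sum hn k hk]
  intro v hv w hw hEq
  rw [Finset.mem_coe, Finset.mem_filter] at hv hw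
  obtain ⟨-, hvk, -⟩ := hv
  obtain ⟨-, hwk, -⟩ := hw
  rcases Sym2.eq_iff.mp hEq with ⟨h1, -⟩ | ⟨h1, h2⟩
  · exact h1
  · exfalso
    have e1 : (v.1 : ℕ) = ((childV hn w).1 : ℕ) := by rw [h1]
    have e2 : ((childV hn v).1 : ℕ) = (w.1 : ℕ) := by rw [h2]
    rw [childV_fst hn hwk] at e1
    rw [childV_fst hn hvk] at e2
    omega

end IMAux
namespace IMAux

variable {n k : ℕ}

lemma indMatchNum_eq (hn : 3 ≤ n) (hk : 1 ≤ k) :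
    indMatchNum (semiTree n k) = Bv n k := by
  have hbdd : BddAbove {d | ∃ M : Finset (Sym2 (SemiVert n k)),
      IsInducedMatching (semiTree n k) (M : Set (Sym2 (SemiVert n k))) ∧ M.card = d} := by
    refine ⟨Fintype.card (Sym2 (SemiVert n k)), ?_⟩
    rintro d ⟨M, -, rfl⟩
    exact le_trans (Finset.card_le_univ M) (le_of_eq Finset.card_univ)
  apply le_antisymm
  · apply csSup_le
    · exact ⟨0, ∅, ⟨by simp, by simp⟩, Finset.card_empty⟩
    · rintro d ⟨M, hM, rfl⟩
      rw [card_eq_sum_xM hM hk]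
      exact sum_le_Bv hn (xM M) (x_le hM 0) (x_zero_one hM) (x_le hM) (constraint_K hM hn) k
  · exact le_csSup hbdd ⟨blockM n k hn, blockM_induced hn, blockM_card hn hk⟩

end IMAux


theorem indMatchNum_semiTree (n k : ℕ) (hn : 3 ≤ n) (hk : 1 ≤ k) :
    (k % 3 = 0 →
      (indMatchNum (semiTree n k) : ℚ) =
        ((n : ℚ) * ((n : ℚ) - 1) ^ (k + 1) - (n : ℚ) * ((n : ℚ) - 1)) / (((n : ℚ) - 1) ^ 3 - 1)) ∧
    (k % 3 = 1 →
      (indMatchNum (semiTree n k) : ℚ) =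
        ((n : ℚ) * ((n : ℚ) - 1) ^ (k + 1) - ((n : ℚ) - 1) ^ 2 - 1) / (((n : ℚ) - 1) ^ 3 - 1)) ∧
    (k % 3 = 2 →
      (indMatchNum (semiTree n k) : ℚ) =
        ((n : ℚ) * ((n : ℚ) - 1) ^ (k + 1) - (n : ℚ)) / (((n : ℚ) - 1) ^ 3 - 1)) := by

  have hden : ((n : ℚ) - 1) ^ 3 - 1 ≠ 0 := by
    have h3 : (3 : ℚ) ≤ (n : ℚ) := by exact_mod_cast hn
    have h2 : (2 : ℚ) ≤ (n : ℚ) - 1 := by linarith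
    have h4 : (4 : ℚ) ≤ ((n : ℚ) - 1) ^ 2 := by nlinarith
    have h8 : (8 : ℚ) ≤ ((n : ℚ) - 1) ^ 3 := by nlinarith
    intro hzero
    linarith
  have hBv := IMAux.Bv_cast hn k hk
  refine ⟨fun h => ?_, fun h => ?_, fun h => ?_⟩ <;>
    rw [IMAux.indMatchNum_eq hn hk, eq_div_iff hden] <;> rw [h] at hBv <;>
    norm_num at hBv <;> exact hBv
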